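/- arXiv:1704.05442 — 2 statements merged into one kernel-verified Lean document; each statement's English description precedes it below -/
import Mathlib

section
/- Let n ≥ 10 with n ≡ 1 (mod 3) and set l' = (n-1)/3. Then f(1,n) - f(l',n) = 4 sin(π/n) cos((8+n)π/(6n)) sin((10-n)π/(6n)); this is zero when n = 10 and strictly negative when n > 10. -/
open Real

/-- `f(l,n) = cos(2πl/n) - cos(4πl/n)`. -/
noncomputable def lorenz96f (l n : ℕ) : ℝ :=
  Real.cos (2 * Real.pi * l / n) - Real.cos (4 * Real.pi * l / n)

lemma lorenz96_key (a : ℝ) :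
    Real.cos (6*a) - Real.cos (12*a) - Real.cos (2*π/3 - 2*a) + Real.cos (4*π/3 - 4*a)
      = 4 * Real.sin (3*a) * Real.cos (4*a + π/6) * Real.sin (5*a - π/6) := by
  have e1 : cos (6*a) - cos (2*π/3 - 2*a) = -2 * sin (2*a + π/3) * sin (4*a - π/3) := by
    rw [Real.cos_sub_cos, show (6*a + (2*π/3 - 2*a))/2 = 2*a + π/3 by ring,
      show (6*a - (2*π/3 - 2*a))/2 = 4*a - π/3 by ring]
  have e2 : cos (12*a) - cos (4*π/3 - 4*a) = -2 * sin (4*a + 2*π/3) * sin (8*a - 2*π/3) := by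
    rw [Real.cos_sub_cos, show (12*a + (4*π/3 - 4*a))/2 = 4*a + 2*π/3 by ring,
      show (12*a - (4*π/3 - 4*a))/2 = 8*a - 2*π/3 by ring]
  have e3 : sin (4*a + 2*π/3) = - sin (4*a - π/3) := by
    rw [show 4*a + 2*π/3 = π - (π/3 - 4*a) by ring, Real.sin_pi_sub,
      show π/3 - 4*a = -(4*a - π/3) by ring, Real.sin_neg]
  have e4 : sin (2*a + π/3) + sin (8*a - 2*π/3) = 2 * sin (5*a - π/6) * sin (3*a) := by
    have h1 := Real.sin_add (5*a - π/6) (π/2 - 3*a)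
    have h2 := Real.sin_sub (5*a - π/6) (π/2 - 3*a)
    rw [show (5*a - π/6) + (π/2 - 3*a) = 2*a + π/3 by ring] at h1
    rw [show (5*a - π/6) - (π/2 - 3*a) = 8*a - 2*π/3 by ring] at h2
    rw [h1, h2, Real.cos_pi_div_two_sub, Real.sin_pi_div_two_sub]
    ring
  have e5 : cos (4*a + π/6) = - sin (4*a - π/3) := by
    rw [show 4*a + π/6 = π/2 - (π/3 - 4*a) by ring, Real.cos_pi_div_two_sub,
      show π/3 - 4*a = -(4*a - π/3) by ring, Real.sin_neg]
  rw [e3] at e2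
  linear_combination e1 - e2 - 2*Real.sin (4*a - π/3)*e4 - 4*Real.sin (3*a)*Real.sin (5*a - π/6)*e5

/-- For `n ≥ 10` with `n ≡ 1 (mod 3)` and `l' = (n-1)/3`:
`f(1,n) - f(l',n) = 4 sin(π/n) cos((8+n)π/(6n)) sin((10-n)π/(6n))`;
this is zero when `n = 10` and strictly negative when `n > 10`. -/
theorem lorenz96_f_difference_mod_one (n : ℕ) (hn : 10 ≤ n) (hmod : n % 3 = 1) :
    lorenz96f 1 n - lorenz96f ((n - 1) / 3) n
      = 4 * Real.sin (Real.pi / n) * Real.cos ((8 + n) * Real.pi / (6 * n))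
          * Real.sin ((10 - (n : ℝ)) * Real.pi / (6 * n)) ∧
    (n = 10 → lorenz96f 1 n - lorenz96f ((n - 1) / 3) n = 0) ∧
    (10 < n → lorenz96f 1 n - lorenz96f ((n - 1) / 3) n < 0) := by
  have hn0 : (0:ℝ) < n := by exact_mod_cast (by omega : 0 < n)
  obtain ⟨k, hk⟩ : ∃ k, n = 3*k + 1 := ⟨(n-1)/3, by omega⟩
  have hl : (n - 1) / 3 = k := by omega
  have hkR : (n:ℝ) = 3*(k:ℝ) + 1 := by rw [hk]; push_cast; ring
  set a := π / (3*(n:ℝ)) with ha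
  have main : lorenz96f 1 n - lorenz96f ((n - 1) / 3) n
      = 4 * Real.sin (Real.pi / n) * Real.cos ((8 + n) * Real.pi / (6 * n))
          * Real.sin ((10 - (n : ℝ)) * Real.pi / (6 * n)) := by
    rw [hl]
    unfold lorenz96f
    push_cast
    rw [show 2*π*(1:ℝ)/n = 6*a by rw [ha]; field_simp; ring,
        show 4*π*(1:ℝ)/n = 12*a by rw [ha]; field_simp; ring,
        show 2*π*(k:ℝ)/n = 2*π/3 - 2*a by rw [ha, hkR]; field_simp [hkR ▸ hn0.ne']; ring,
        show 4*π*(k:ℝ)/n = 4*π/3 - 4*a by rw [ha, hkR]; field_simp [hkR ▸ hn0.ne']; ring,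
        show π/(n:ℝ) = 3*a by rw [ha]; field_simp,
        show (8+(n:ℝ))*π/(6*n) = 4*a + π/6 by rw [ha]; field_simp; ring,
        show (10-(n:ℝ))*π/(6*n) = 5*a - π/6 by rw [ha]; field_simp; ring]
    linear_combination lorenz96_key a
  refine ⟨main, ?_, ?_⟩
  · intro h10
    rw [main, h10]
    norm_num
  · intro hlt
    have hn11 : (11:ℝ) ≤ n := by exact_mod_cast hlt
    rw [main]
    have h1 : 0 < Real.sin (π/n) := by
      apply Real.sin_pos_of_pos_of_lt_pi (by positivity)
      calc π / n ≤ π / 11 := by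
            apply div_le_div_of_nonneg_left pi_pos.le (by norm_num) hn11
        _ < π := by linarith [div_lt_self pi_pos (by norm_num : (1:ℝ) < 11)]
    have h2 : 0 < Real.cos ((8 + (n:ℝ)) * π / (6*n)) := by
      apply Real.cos_pos_of_mem_Ioo
      constructor
      · have : 0 < (8 + (n:ℝ)) * π / (6*n) := by positivity
        linarith [pi_pos]
      · rw [div_lt_iff₀ (by positivity)]
        nlinarith [pi_pos]
    have h3 : Real.sin ((10 - (n:ℝ)) * π / (6*n)) < 0 := by
      apply Real.sin_neg_of_neg_of_neg_pi_lt
      · apply div_neg_of_neg_of_pos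
        · have : (10:ℝ) - n < 0 := by linarith
          nlinarith [pi_pos]
        · positivity
      · have hneg : -((10 - (n:ℝ)) * π / (6*n)) = ((n:ℝ) - 10) * π / (6*n) := by ring
        rw [neg_lt, hneg, div_lt_iff₀ (by positivity)]
        nlinarith [pi_pos]
    nlinarith [mul_pos h1 h2, mul_pos (mul_pos h1 h2) (neg_pos.mpr h3)]
end

section
/- Let l_1(n) ∈ [n/6, n/4] maximize f(l,n) over integers 0 < l < n/3. Then 2πl_1(n)/n → arccos(1/4) as n → ∞; consequently 2π tan(π l_1(n)/n) → 2π tan(arccos(1/4)/2) and n/l_1(n) → 2π/arccos(1/4) as n → ∞. -/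
open Real Filter Topology

/-- The shape function `g(y) = cos y - cos 2y`. -/
noncomputable def lorenz96g (y : ℝ) : ℝ := Real.cos y - Real.cos (2 * y)

lemma lorenz96g_eq (y : ℝ) : lorenz96g y = 9/8 - 2 * (Real.cos y - 1/4)^2 := by
  rw [lorenz96g, Real.cos_two_mul]; ring

lemma lorenz96f_eq (l n : ℕ) : lorenz96f l n = lorenz96g (2 * Real.pi * l / n) := by
  unfold lorenz96f lorenz96g
  congr 2
  ring

lemma lorenz96g_le (y : ℝ) : lorenz96g y ≤ 9/8 := by
  rw [lorenz96g_eq]; nlinarith [sq_nonneg (Real.cos y - 1/4)]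

lemma lorenz96g_cont : Continuous lorenz96g := by
  unfold lorenz96g
  fun_prop

lemma floor_mul_div_tendsto {t : ℝ} (ht : 0 < t) :
    Tendsto (fun n : ℕ => (⌊(n : ℝ) * t⌋₊ : ℝ) / n) atTop (𝓝 t) := by
  have hlow : Tendsto (fun n : ℕ => t - 1 / (n : ℝ)) atTop (𝓝 t) := by
    simpa using tendsto_const_nhds.sub (tendsto_one_div_atTop_nhds_zero_nat (𝕜 := ℝ))
  refine tendsto_of_tendsto_of_tendsto_of_le_of_le' hlow tendsto_const_nhds ?_ ?_
  · filter_upwards [eventually_gt_atTop 0] with n hn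
    have hn' : (0:ℝ) < n := by exact_mod_cast hn
    have key : t - 1 / (n:ℝ) = ((n:ℝ) * t - 1) / n := by field_simp
    rw [key, div_le_div_iff₀ hn' hn']
    nlinarith [Nat.lt_floor_add_one ((n:ℝ) * t)]
  · filter_upwards [eventually_gt_atTop 0] with n hn
    have hn' : (0:ℝ) < n := by exact_mod_cast hn
    have := Nat.floor_le (by positivity : (0:ℝ) ≤ (n:ℝ) * t)
    rw [div_le_iff₀ hn']
    linarith [Nat.floor_le (by positivity : (0:ℝ) ≤ (n:ℝ) * t)]

/-- If `l₁(n) ∈ [n/6, n/4]` maximizes `f(l,n)` over integers `0 < l < n/3`, then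
`2πl₁(n)/n → arccos(1/4)` as `n → ∞`; consequently
`2π tan(π l₁(n)/n) → 2π tan(arccos(1/4)/2)` and `n/l₁(n) → 2π/arccos(1/4)`. -/
theorem lorenz96_asymptotic_wave_number (l₁ : ℕ → ℕ)
    (hloc : ∀ n : ℕ, 4 ≤ n → n ≠ 7 →
      (n : ℝ) / 6 ≤ l₁ n ∧ (l₁ n : ℝ) ≤ (n : ℝ) / 4 ∧
      (∀ l : ℕ, 0 < l → (l : ℝ) < (n : ℝ) / 3 → lorenz96f l n ≤ lorenz96f (l₁ n) n)) :
    Tendsto (fun n : ℕ => 2 * Real.pi * (l₁ n : ℝ) / n) atTop (𝓝 (Real.arccos (1 / 4))) ∧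
    Tendsto (fun n : ℕ => 2 * Real.pi * Real.tan (Real.pi * (l₁ n : ℝ) / n)) atTop
      (𝓝 (2 * Real.pi * Real.tan (Real.arccos (1 / 4) / 2))) ∧
    Tendsto (fun n : ℕ => (n : ℝ) / (l₁ n : ℝ)) atTop
      (𝓝 (2 * Real.pi / Real.arccos (1 / 4))) := by
  have pi_pos := Real.pi_pos
  set A := Real.arccos (1/4) with hA
  have hApos : 0 < A := Real.arccos_pos.2 (by norm_num)
  have hAlt : A < Real.pi / 2 := Real.arccos_lt_pi_div_two.2 (by norm_num)
  have hcosA : Real.cos A = 1/4 := Real.cos_arccos (by norm_num) (by norm_num)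
  set t : ℝ := A / (2 * Real.pi) with htdef
  have ht : 0 < t := by positivity
  have htA : 2 * Real.pi * t = A := by rw [htdef]; field_simp
  have htlt : t < 1/3 := by
    rw [htdef, div_lt_iff₀ (by positivity)]
    nlinarith
  set y := fun n : ℕ => 2 * Real.pi * (l₁ n : ℝ) / n with hy
  set c := fun n : ℕ => ⌊(n : ℝ) * t⌋₊ with hc
  -- candidate convergence
  have hcand : Tendsto (fun n : ℕ => lorenz96g (2 * Real.pi * (c n) / n)) atTop (𝓝 (9/8)) := by
    have h1 : Tendsto (fun n : ℕ => 2 * Real.pi * (c n : ℝ) / n) atTop (𝓝 A) := by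
      have := (floor_mul_div_tendsto ht).const_mul (2 * Real.pi)
      rw [mul_comm] at htA
      simp only [htdef] at this ⊢
      convert this using 2 with n
      · ring
      · field_simp
    have := (lorenz96g_cont.tendsto A).comp h1
    have hgA : lorenz96g A = 9/8 := by rw [lorenz96g_eq, hcosA]; ring
    rw [hgA] at this
    exact this
  -- eventual facts
  have hev : ∀ᶠ n : ℕ in atTop, 4 ≤ n ∧ n ≠ 7 ∧ 1 ≤ (n : ℝ) * t ∧ 0 < n := by
    have h1 : ∀ᶠ n : ℕ in atTop, (1 / t : ℝ) ≤ n := by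
      have := tendsto_natCast_atTop_atTop (R := ℝ)
      exact this.eventually_ge_atTop _
    filter_upwards [eventually_ge_atTop 8, h1] with n hn h1n
    refine ⟨by omega, by omega, ?_, by omega⟩
    rw [div_le_iff₀ ht] at h1n
    nlinarith
  -- squeeze for g ∘ y
  have hgy : Tendsto (fun n : ℕ => lorenz96g (y n)) atTop (𝓝 (9/8)) := by
    refine tendsto_of_tendsto_of_tendsto_of_le_of_le' hcand tendsto_const_nhds ?_
      (Eventually.of_forall fun n => lorenz96g_le _)
    filter_upwards [hev] with n ⟨h4, h7, h1t, hn0⟩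
    have hn' : (0:ℝ) < n := by exact_mod_cast hn0
    obtain ⟨_, _, hmax⟩ := hloc n h4 h7
    have hc0 : 0 < c n := by
      rw [hc]
      exact Nat.floor_pos.2 h1t
    have hclt : (c n : ℝ) < (n : ℝ) / 3 := by
      have h1 : (c n : ℝ) ≤ (n : ℝ) * t := Nat.floor_le (by positivity)
      have : (n : ℝ) * t < (n : ℝ) / 3 := by
        rw [div_eq_mul_inv]
        apply mul_lt_mul_of_pos_left _ hn'
        linarith
      linarith
    have := hmax (c n) hc0 hclt
    rw [lorenz96f_eq, lorenz96f_eq] at this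
    exact this
  -- cos (y n) → 1/4
  have hsq : Tendsto (fun n : ℕ => (Real.cos (y n) - 1/4)^2) atTop (𝓝 0) := by
    have : Tendsto (fun n : ℕ => (9/8 - lorenz96g (y n)) / 2) atTop (𝓝 0) := by
      have := (tendsto_const_nhds (x := (9/8 : ℝ)) (f := atTop (α := ℕ))).sub hgy
      simpa using this.div_const 2
    refine this.congr fun n => ?_
    rw [lorenz96g_eq]; ring
  have hcos : Tendsto (fun n : ℕ => Real.cos (y n)) atTop (𝓝 (1/4)) := by
    rw [tendsto_iff_norm_sub_tendsto_zero]
    have habs : Tendsto (fun n : ℕ => Real.sqrt ((Real.cos (y n) - 1/4)^2)) atTop (𝓝 0) := by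
      have := (Real.continuous_sqrt.tendsto 0).comp hsq
      simpa [Function.comp_def] using this
    simpa [Real.sqrt_sq_eq_abs, Real.norm_eq_abs] using habs
  -- bounds on y n
  have hybnd : ∀ᶠ n : ℕ in atTop, 0 ≤ y n ∧ y n ≤ Real.pi := by
    filter_upwards [hev] with n ⟨h4, h7, h1t, hn0⟩
    have hn' : (0:ℝ) < n := by exact_mod_cast hn0
    obtain ⟨hlo, hhi, _⟩ := hloc n h4 h7
    constructor
    · positivity
    · rw [hy]
      rw [div_le_iff₀ hn']
      nlinarith
  -- first conclusion
  have h1 : Tendsto y atTop (𝓝 A) := by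
    have := (Real.continuous_arccos.tendsto (1/4)).comp hcos
    rw [show Real.arccos (1/4) = A from rfl] at this
    refine this.congr' ?_
    filter_upwards [hybnd] with n ⟨h0, hπ⟩
    exact Real.arccos_cos h0 hπ
  refine ⟨h1, ?_, ?_⟩
  · -- tan part
    have hhalf : Tendsto (fun n => y n / 2) atTop (𝓝 (A / 2)) := h1.div_const 2
    have hcosne : Real.cos (A / 2) ≠ 0 := by
      have : 0 < Real.cos (A / 2) :=
        Real.cos_pos_of_mem_Ioo ⟨by linarith, by linarith⟩
      linarith
    have htan := (Real.continuousAt_tan.2 hcosne).tendsto.comp hhalf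
    have := htan.const_mul (2 * Real.pi)
    refine this.congr fun n => ?_
    simp only [Function.comp]
    rw [hy]
    ring_nf
  · -- n / l₁ n part
    have hAne : A ≠ 0 := ne_of_gt hApos
    have := (tendsto_const_nhds (x := (2 * Real.pi : ℝ)) (f := atTop (α := ℕ))).div h1 hAne
    refine this.congr' ?_
    filter_upwards [hev] with n ⟨h4, h7, h1t, hn0⟩
    have hn' : (0:ℝ) < n := by exact_mod_cast hn0
    obtain ⟨hlo, _, _⟩ := hloc n h4 h7
    have hl0 : (0:ℝ) < (l₁ n : ℝ) := by
      have : (0:ℝ) < (n:ℝ)/6 := by positivity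
      linarith
    rw [hy]
    simp only [Pi.div_apply]
    field_simp
end
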